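/- Suppose a process Y = (Y(t), t > 0) of the form Y(t) = t^{-H} X(t), where X is self-similar with Hurst parameter H and E[X(t)] = 0, E[X(t)²] = t^{2H}, is locally stationary at a point s₀ > 0 with index α and limit constant D(s₀). Then Y is locally stationary at every point s > 0 with the same index α and limit constant D(s) = (s₀/s)^α D(s₀). -/

import Mathlib

open MeasureTheory Filter Topology

lemma aux_scale_integral
    {Ω : Type*} [MeasurableSpace Ω] (μ : Measure Ω)
    (X : ℝ → Ω → ℝ) (hXm : ∀ t, Measurable (X t)) (H : ℝ)
    (hss : ∀ a > (0:ℝ), ∀ (n : ℕ) (t : Fin n → ℝ),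
      Measure.map (fun ω i => X (a * t i) ω) μ =
        Measure.map (fun ω i => a ^ H * X (t i) ω) μ)
    (a : ℝ) (ha : 0 < a) (t₁ t₂ : ℝ) (h₁ : 0 < t₁) (h₂ : 0 < t₂) :
    ∫ ω, ((a * t₁) ^ (-H) * X (a * t₁) ω - (a * t₂) ^ (-H) * X (a * t₂) ω) ^ 2 ∂μ
      = ∫ ω, (t₁ ^ (-H) * X t₁ ω - t₂ ^ (-H) * X t₂ ω) ^ 2 ∂μ := by
  have key := hss a ha 2 ![t₁, t₂]
  set c₁ : ℝ := (a * t₁) ^ (-H) with hc₁def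
  set c₂ : ℝ := (a * t₂) ^ (-H) with hc₂def
  have hc₁ : c₁ * a ^ H = t₁ ^ (-H) := by
    rw [hc₁def, Real.mul_rpow ha.le h₁.le, mul_comm ((a:ℝ) ^ (-H)) _, mul_assoc,
      ← Real.rpow_add ha]
    simp
  have hc₂ : c₂ * a ^ H = t₂ ^ (-H) := by
    rw [hc₂def, Real.mul_rpow ha.le h₂.le, mul_comm ((a:ℝ) ^ (-H)) _, mul_assoc,
      ← Real.rpow_add ha]
    simp
  have hg : Measurable (fun v : Fin 2 → ℝ => (c₁ * v 0 - c₂ * v 1) ^ 2) := by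
    fun_prop
  have hf₁ : Measurable (fun ω => fun i : Fin 2 => X (a * (![t₁, t₂]) i) ω) :=
    measurable_pi_lambda _ (fun i => hXm _)
  have hf₂ : Measurable (fun ω => fun i : Fin 2 => a ^ H * X ((![t₁, t₂]) i) ω) :=
    measurable_pi_lambda _ (fun i => (hXm _).const_mul _)
  have e1 : ∫ ω, ((a * t₁) ^ (-H) * X (a * t₁) ω - (a * t₂) ^ (-H) * X (a * t₂) ω) ^ 2 ∂μ
      = ∫ v, (c₁ * v 0 - c₂ * v 1) ^ 2
          ∂(Measure.map (fun ω => fun i : Fin 2 => X (a * (![t₁, t₂]) i) ω) μ) := by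
    rw [integral_map hf₁.aemeasurable hg.aestronglyMeasurable]
    simp [hc₁def, hc₂def]
  have e2 : ∫ v, (c₁ * v 0 - c₂ * v 1) ^ 2
          ∂(Measure.map (fun ω => fun i : Fin 2 => a ^ H * X ((![t₁, t₂]) i) ω) μ)
      = ∫ ω, (t₁ ^ (-H) * X t₁ ω - t₂ ^ (-H) * X t₂ ω) ^ 2 ∂μ := by
    rw [integral_map hf₂.aemeasurable hg.aestronglyMeasurable]
    congr 1
    ext ω
    simp only [Matrix.cons_val_zero, Matrix.cons_val_one, Matrix.head_cons]
    rw [← hc₁, ← hc₂]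
    ring
  rw [e1, key, e2]

theorem locally_stationary_everywhere_of_selfsimilar
    {Ω : Type*} [MeasurableSpace Ω] (μ : Measure Ω) [IsProbabilityMeasure μ]
    (X : ℝ → Ω → ℝ) (hXm : ∀ t, Measurable (X t))
    (hL2 : ∀ t, MemLp (X t) 2 μ)
    (H : ℝ) (hH : H ∈ Set.Ioo (0:ℝ) 1)
    (hcent : ∀ t ≥ (0:ℝ), ∫ ω, X t ω ∂μ = 0)
    (hvar : ∀ t ≥ (0:ℝ), ∫ ω, (X t ω) ^ 2 ∂μ = t ^ (2 * H))
    (hss : ∀ a > (0:ℝ), ∀ (n : ℕ) (t : Fin n → ℝ),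
      Measure.map (fun ω i => X (a * t i) ω) μ =
        Measure.map (fun ω i => a ^ H * X (t i) ω) μ)
    (α : ℝ) (hα : α ∈ Set.Ioc (0:ℝ) 2)
    (s₀ D₀ : ℝ) (hs₀ : 0 < s₀) (hD₀ : 0 < D₀)
    (hloc : Tendsto
      (fun p : ℝ × ℝ =>
        (∫ ω, (p.1 ^ (-H) * X p.1 ω - p.2 ^ (-H) * X p.2 ω) ^ 2 ∂μ) / |p.1 - p.2| ^ α)
      (𝓝[{p : ℝ × ℝ | 0 < p.1 ∧ 0 < p.2 ∧ p.1 ≠ p.2}] (s₀, s₀)) (𝓝 D₀)) :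
    ∀ s > (0:ℝ), Tendsto
      (fun p : ℝ × ℝ =>
        (∫ ω, (p.1 ^ (-H) * X p.1 ω - p.2 ^ (-H) * X p.2 ω) ^ 2 ∂μ) / |p.1 - p.2| ^ α)
      (𝓝[{p : ℝ × ℝ | 0 < p.1 ∧ 0 < p.2 ∧ p.1 ≠ p.2}] (s, s))
      (𝓝 ((s₀ / s) ^ α * D₀)) := by
  intro s hs
  set a : ℝ := s / s₀ with hadef
  have ha : 0 < a := div_pos hs hs₀
  set b : ℝ := s₀ / s with hbdef
  have hb : 0 < b := div_pos hs₀ hs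
  set S : Set (ℝ × ℝ) := {p : ℝ × ℝ | 0 < p.1 ∧ 0 < p.2 ∧ p.1 ≠ p.2} with hSdef
  set F : ℝ × ℝ → ℝ := fun p =>
    (∫ ω, (p.1 ^ (-H) * X p.1 ω - p.2 ^ (-H) * X p.2 ω) ^ 2 ∂μ) / |p.1 - p.2| ^ α
    with hFdef
  set ψ : ℝ × ℝ → ℝ × ℝ := fun p => (b * p.1, b * p.2) with hψdef
  have hψcont : Continuous ψ := by fun_prop
  have hψmaps : Set.MapsTo ψ S S := by
    intro p hp
    obtain ⟨hp1, hp2, hp3⟩ := hp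
    refine ⟨mul_pos hb hp1, mul_pos hb hp2, ?_⟩
    intro h
    exact hp3 (mul_left_cancel₀ hb.ne' h)
  have hψtend : Tendsto ψ (𝓝[S] (s, s)) (𝓝[S] (s₀, s₀)) := by
    have heq : ψ (s, s) = (s₀, s₀) := by
      simp only [hψdef, hbdef, Prod.mk.injEq]
      constructor <;> field_simp
    have h := (hψcont.continuousWithinAt (s := S) (x := ((s, s) : ℝ × ℝ))).tendsto_nhdsWithin
      hψmaps
    rwa [heq] at h
  have hkey : ∀ p ∈ S, F p = b ^ α * F (ψ p) := by
    intro p hp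
    obtain ⟨hp1, hp2, hp3⟩ := hp
    have hscale := aux_scale_integral μ X hXm H hss a ha (b * p.1) (b * p.2)
      (mul_pos hb hp1) (mul_pos hb hp2)
    have hab1 : a * (b * p.1) = p.1 := by
      rw [hadef, hbdef]; field_simp
    have hab2 : a * (b * p.2) = p.2 := by
      rw [hadef, hbdef]; field_simp
    rw [hab1, hab2] at hscale
    have habs : |b * p.1 - b * p.2| ^ α = b ^ α * |p.1 - p.2| ^ α := by
      rw [← mul_sub, abs_mul, abs_of_pos hb, Real.mul_rpow hb.le (abs_nonneg _)]
    simp only [hFdef, hψdef]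
    rw [hscale, habs]
    have hne : |p.1 - p.2| ^ α ≠ 0 := by
      have : (0:ℝ) < |p.1 - p.2| := abs_pos.mpr (sub_ne_zero.mpr hp3)
      exact (Real.rpow_pos_of_pos this α).ne'
    have hbne : (b:ℝ) ^ α ≠ 0 := (Real.rpow_pos_of_pos hb α).ne'
    field_simp
  have hmain : Tendsto (fun p => b ^ α * F (ψ p)) (𝓝[S] (s, s)) (𝓝 (b ^ α * D₀)) :=
    (hloc.comp hψtend).const_mul _
  have : Tendsto F (𝓝[S] (s, s)) (𝓝 (b ^ α * D₀)) := by
    refine hmain.congr' ?_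
    filter_upwards [self_mem_nhdsWithin] with p hp
    exact (hkey p hp).symm
  exact this
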